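/- For k ≥ 1, the subalgebras ℚ[x₁, x₂, (1+x₂^k)/x₁, (1+x₁^k)/x₂] and ℚ[x₁, x₂, (1+x₂^k)/x₁, (x₁^k + (1+x₂^k)^k)/(x₁^k x₂)] of the field ℚ(x₁, x₂) are equal. -/

import Mathlib

set_option maxHeartbeats 1000000


noncomputable abbrev K : Type := FractionRing (MvPolynomial (Fin 2) ℚ)
noncomputable abbrev x1 : K := algebraMap (MvPolynomial (Fin 2) ℚ) K (MvPolynomial.X 0)
noncomputable abbrev x2 : K := algebraMap (MvPolynomial (Fin 2) ℚ) K (MvPolynomial.X 1)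

lemma hx1_ne : x1 ≠ 0 := by
  have h := IsFractionRing.injective (MvPolynomial (Fin 2) ℚ) K
  simp [map_ne_zero_iff _ h, MvPolynomial.X_ne_zero]

lemma hx2_ne : x2 ≠ 0 := by
  have h := IsFractionRing.injective (MvPolynomial (Fin 2) ℚ) K
  simp [map_ne_zero_iff _ h, MvPolynomial.X_ne_zero]

lemma geom_key (k : ℕ) :
    x2 ^ k * (∑ i ∈ Finset.range k, (1 + x2 ^ k) ^ i) = (1 + x2 ^ k) ^ k - 1 := by
  have h := geom_sum_mul (1 + x2 ^ k) k
  rw [add_sub_cancel_left] at h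
  linear_combination h

/-- for k ≥ 1 the subalgebras ℚ[x₁, x₂, (1+x₂^k)/x₁, (1+x₁^k)/x₂] and
ℚ[x₁, x₂, (1+x₂^k)/x₁, (x₁^k + (1+x₂^k)^k)/(x₁^k x₂)] of ℚ(x₁,x₂) are equal. -/
theorem stmt_11 (k : ℕ) (hk : 1 ≤ k) :
    Algebra.adjoin ℚ ({x1, x2, (1 + x2 ^ k) / x1, (1 + x1 ^ k) / x2} : Set K)
      = Algebra.adjoin ℚ ({x1, x2, (1 + x2 ^ k) / x1,
          (x1 ^ k + (1 + x2 ^ k) ^ k) / (x1 ^ k * x2)} : Set K) := by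
  have hx1 := hx1_ne
  have hx2 := hx2_ne
  set S : K := ∑ i ∈ Finset.range k, (1 + x2 ^ k) ^ i with hS
  have hgeom := geom_key k
  have hpow : x2 ^ (k - 1) * x2 = x2 ^ k := by
    rw [← pow_succ, Nat.sub_add_cancel hk]
  -- key field identities
  have h1 : (x1 ^ k + (1 + x2 ^ k) ^ k) / (x1 ^ k * x2)
      = ((1 + x2 ^ k) / x1) ^ k * ((1 + x1 ^ k) / x2) - x2 ^ (k - 1) * S := by
    rw [div_pow]
    field_simp
    linear_combination (x1 : K) ^ k * S * hpow + x1 ^ k * hgeom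
  have h2 : (1 + x1 ^ k) / x2
      = x1 ^ k * ((x1 ^ k + (1 + x2 ^ k) ^ k) / (x1 ^ k * x2)) - x2 ^ (k - 1) * S := by
    field_simp
    linear_combination S * hpow + hgeom
  -- S is in every subalgebra containing x2
  have hSmem : ∀ (A : Subalgebra ℚ K), x2 ∈ A → S ∈ A := by
    intro A hA
    exact Subalgebra.sum_mem A fun i _ =>
      pow_mem (add_mem (one_mem A) (pow_mem hA k)) i
  apply le_antisymm
  · rw [Algebra.adjoin_le_iff]
    intro z hz
    have m1 : x1 ∈ Algebra.adjoin ℚ ({x1, x2, (1 + x2 ^ k) / x1,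
        (x1 ^ k + (1 + x2 ^ k) ^ k) / (x1 ^ k * x2)} : Set K) :=
      Algebra.subset_adjoin (Set.mem_insert _ _)
    have m2 : x2 ∈ Algebra.adjoin ℚ ({x1, x2, (1 + x2 ^ k) / x1,
        (x1 ^ k + (1 + x2 ^ k) ^ k) / (x1 ^ k * x2)} : Set K) :=
      Algebra.subset_adjoin (Set.mem_insert_of_mem _ (Set.mem_insert _ _))
    have m3 : (1 + x2 ^ k) / x1 ∈ Algebra.adjoin ℚ ({x1, x2, (1 + x2 ^ k) / x1,
        (x1 ^ k + (1 + x2 ^ k) ^ k) / (x1 ^ k * x2)} : Set K) :=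
      Algebra.subset_adjoin (Set.mem_insert_of_mem _ (Set.mem_insert_of_mem _
        (Set.mem_insert _ _)))
    have m4 : (x1 ^ k + (1 + x2 ^ k) ^ k) / (x1 ^ k * x2) ∈ Algebra.adjoin ℚ
        ({x1, x2, (1 + x2 ^ k) / x1,
          (x1 ^ k + (1 + x2 ^ k) ^ k) / (x1 ^ k * x2)} : Set K) :=
      Algebra.subset_adjoin (Set.mem_insert_of_mem _ (Set.mem_insert_of_mem _
        (Set.mem_insert_of_mem _ rfl)))
    rcases hz with h | h | h | h
    · exact h ▸ m1
    · exact h ▸ m2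
    · exact h ▸ m3
    · rw [h, h2]
      exact sub_mem (mul_mem (pow_mem m1 k) m4)
        (mul_mem (pow_mem m2 (k - 1)) (hSmem _ m2))
  · rw [Algebra.adjoin_le_iff]
    intro z hz
    have m1 : x1 ∈ Algebra.adjoin ℚ
        ({x1, x2, (1 + x2 ^ k) / x1, (1 + x1 ^ k) / x2} : Set K) :=
      Algebra.subset_adjoin (Set.mem_insert _ _)
    have m2 : x2 ∈ Algebra.adjoin ℚ
        ({x1, x2, (1 + x2 ^ k) / x1, (1 + x1 ^ k) / x2} : Set K) :=
      Algebra.subset_adjoin (Set.mem_insert_of_mem _ (Set.mem_insert _ _))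
    have m3 : (1 + x2 ^ k) / x1 ∈ Algebra.adjoin ℚ
        ({x1, x2, (1 + x2 ^ k) / x1, (1 + x1 ^ k) / x2} : Set K) :=
      Algebra.subset_adjoin (Set.mem_insert_of_mem _ (Set.mem_insert_of_mem _
        (Set.mem_insert _ _)))
    have m4 : (1 + x1 ^ k) / x2 ∈ Algebra.adjoin ℚ
        ({x1, x2, (1 + x2 ^ k) / x1, (1 + x1 ^ k) / x2} : Set K) :=
      Algebra.subset_adjoin (Set.mem_insert_of_mem _ (Set.mem_insert_of_mem _
        (Set.mem_insert_of_mem _ rfl)))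
    rcases hz with h | h | h | h
    · exact h ▸ m1
    · exact h ▸ m2
    · exact h ▸ m3
    · rw [h, h1]
      exact sub_mem (mul_mem (pow_mem m3 k) m4)
        (mul_mem (pow_mem m2 (k - 1)) (hSmem _ m2))
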